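/- Adequacy of the logical normalization predicate: if the Kripke logical predicate holds of a term-in-context, Ψ ⊩ P ∈ ⟦A⟧, then P halts under ⌊Ψ⌋, i.e. P reduces in finitely many steps to a normal form under ⌊Ψ⌋. -/

import Mathlib

namespace PQA

/-- Modes of Proto-Quipper-A: unrestricted, linear functional, linear circuit. -/
inductive Mode | U | L | Q
deriving DecidableEq, Repr

/-- The mode preorder generated by U > L, L > Q, Q > L. -/
def Mode.ge : Mode → Mode → Prop
  | .U, _ => True
  | .L, .U => False
  | .L, _ => True
  | .Q, .U => False
  | .Q, _ => True

/-- Types, stratified by mode. -/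
inductive Ty
  | unitT (m : Mode)
  | qubit
  | tensor (m : Mode) (A B : Ty)
  | arrow (m : Mode) (A B : Ty)
  | up (lo hi : Mode) (A : Ty)
  | down (A : Ty)
deriving DecidableEq, Repr

/-- The mode at which a type lives. -/
def Ty.mode : Ty → Mode
  | .unitT m => m
  | .qubit => .Q
  | .tensor m _ _ => m
  | .arrow m _ _ => m
  | .up _ hi _ => hi
  | .down _ => .L

/-- Simple (wire) types at the circuit mode Q. -/
inductive Ty.Simple : Ty → Prop
  | unit : Ty.Simple (.unitT .Q)
  | qubit : Ty.Simple .qubit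
  | tensor {A B : Ty} : Ty.Simple A → Ty.Simple B → Ty.Simple (.tensor .Q A B)

mutual
/-- Terms (functional and circuit, distinguished by mode annotations). -/
inductive Tm
  | var (x : String)
  | lam (m : Mode) (x : String) (M : Tm)
  | triv (m : Mode)
  | pair (m : Mode) (M N : Tm)
  | app (m : Mode) (M N : Tm)
  | susp (M : Tm)
  | force (M : Tm)
  | down (M : Tm)
  | gate (g : String) (S U : Ty)
  | matchWith (M : Tm) (p : Pat)
/-- Match patterns together with their bodies. -/
inductive Pat
  | punit (N : Tm)
  | ppair (x y : String) (N : Tm)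
  | pdown (x : String) (N : Tm)
end

mutual
/-- Capture-naive simultaneous substitution. -/
def Tm.subst (σ : String → Tm) : Tm → Tm
  | .var x => σ x
  | .lam m x M => .lam m x (M.subst (fun y => if y = x then .var y else σ y))
  | .triv m => .triv m
  | .pair m M N => .pair m (M.subst σ) (N.subst σ)
  | .app m M N => .app m (M.subst σ) (N.subst σ)
  | .susp M => .susp (M.subst σ)
  | .force M => .force (M.subst σ)
  | .down M => .down (M.subst σ)
  | .gate g S U => .gate g S U
  | .matchWith M p => .matchWith (M.subst σ) (p.subst σ)

def Pat.subst (σ : String → Tm) : Pat → Pat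
  | .punit N => .punit (N.subst σ)
  | .ppair x y N =>
      .ppair x y (N.subst (fun z => if z = x ∨ z = y then .var z else σ z))
  | .pdown x N => .pdown x (N.subst (fun z => if z = x then .var z else σ z))
end

/-- Substitution of a single term for a variable. -/
def subst1 (x : String) (V M : Tm) : Tm :=
  M.subst (fun y => if y = x then V else .var y)

/-- Variables bound by a pattern. -/
def Pat.vars : Pat → List String
  | .punit _ => []
  | .ppair x y _ => [x, y]
  | .pdown x _ => [x]

/-- The body of a pattern. -/
def Pat.body : Pat → Tm
  | .punit N => N
  | .ppair _ _ N => N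
  | .pdown _ N => N

/-- Apply a function to the body of a pattern (for commuting conversions). -/
def Pat.mapBody (f : Tm → Tm) : Pat → Pat
  | .punit N => .punit (f N)
  | .ppair x y N => .ppair x y (f N)
  | .pdown x N => .pdown x (f N)

/-- Replace the body of a pattern. -/
def Pat.withBody (p : Pat) (B : Tm) : Pat := p.mapBody (fun _ => B)

/-- The context of typed variables bound by a pattern eliminating type `A`. -/
def patCtx : Pat → Ty → List (String × Ty)
  | .punit _, _ => []
  | .ppair x y _, .tensor _ A B => [(x, A), (y, B)]
  | .ppair x y _, _ => [(x, .qubit), (y, .qubit)]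
  | .pdown x _, .down A => [(x, A)]
  | .pdown x _, _ => []

/-- Typing contexts. -/
abbrev Ctx := List (String × Ty)

/-- Every assumption in the context is at a mode ≥ m. -/
def CtxGe (Δ : Ctx) (m : Mode) : Prop := ∀ q ∈ Δ, Mode.ge q.2.mode m

/-- The context is entirely unrestricted. -/
def CtxU (Δ : Ctx) : Prop := CtxGe Δ .U

/-- Context splitting: linear assumptions go to one side, unrestricted
assumptions may be shared. -/
inductive Split : Ctx → Ctx → Ctx → Prop
  | nil : Split [] [] []
  | left {Δ Δ₁ Δ₂ : Ctx} {q : String × Ty} :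
      Split Δ Δ₁ Δ₂ → Split (q :: Δ) (q :: Δ₁) Δ₂
  | right {Δ Δ₁ Δ₂ : Ctx} {q : String × Ty} :
      Split Δ Δ₁ Δ₂ → Split (q :: Δ) Δ₁ (q :: Δ₂)
  | both {Δ Δ₁ Δ₂ : Ctx} {q : String × Ty} :
      q.2.mode = .U → Split Δ Δ₁ Δ₂ → Split (q :: Δ) (q :: Δ₁) (q :: Δ₂)

mutual
/-- The substructural Proto-Quipper-A typing judgment `Δ ⊢ P : A`. -/
inductive HasTy : Ctx → Tm → Ty → Prop
  | var {Δ₁ Δ₂ : Ctx} {x : String} {A : Ty} :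
      CtxU Δ₁ → CtxU Δ₂ → (A.mode = .Q → A.Simple) →
      HasTy (Δ₁ ++ (x, A) :: Δ₂) (.var x) A
  | lam {Δ : Ctx} {m : Mode} {x : String} {M : Tm} {A B : Ty} :
      A.mode = m → B.mode = m → (m = .Q → A.Simple ∧ B.Simple) →
      HasTy ((x, A) :: Δ) M B →
      HasTy Δ (.lam m x M) (.arrow m A B)
  | triv {Δ : Ctx} {m : Mode} : CtxU Δ → HasTy Δ (.triv m) (.unitT m)
  | pair {Δ Δ₁ Δ₂ : Ctx} {m : Mode} {M N : Tm} {A B : Ty} :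
      Split Δ Δ₁ Δ₂ → A.mode = m → B.mode = m →
      HasTy Δ₁ M A → HasTy Δ₂ N B →
      HasTy Δ (.pair m M N) (.tensor m A B)
  | app {Δ Δ₁ Δ₂ : Ctx} {m : Mode} {M N : Tm} {A B : Ty} :
      Split Δ Δ₁ Δ₂ →
      HasTy Δ₁ M (.arrow m A B) → HasTy Δ₂ N A →
      HasTy Δ (.app m M N) B
  | susp {Δ : Ctx} {lo hi : Mode} {M : Tm} {A : Ty} :
      ((lo = .L ∧ hi = .U) ∨ (lo = .Q ∧ hi = .L)) →
      A.mode = lo → CtxGe Δ hi →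
      HasTy Δ M A →
      HasTy Δ (.susp M) (.up lo hi A)
  | force {Δ : Ctx} {lo hi : Mode} {M : Tm} {A : Ty} :
      HasTy Δ M (.up lo hi A) → HasTy Δ (.force M) A
  | down {Δ : Ctx} {M : Tm} {A : Ty} :
      A.mode = .U → HasTy Δ M A → HasTy Δ (.down M) (.down A)
  | gate {Δ : Ctx} {g : String} {S U : Ty} :
      CtxU Δ → S.Simple → U.Simple →
      HasTy Δ (.gate g S U) (.arrow .Q S U)
  | mtch {Δ Δ₁ Δ₂ : Ctx} {M : Tm} {p : Pat} {A B : Ty} :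
      Split Δ Δ₁ Δ₂ →
      HasTy Δ₁ M A → PatTy Δ₂ p A B →
      HasTy Δ (.matchWith M p) B

/-- Pattern typing `Δ ⊢ p : A ⇒ B` for the substructural system. -/
inductive PatTy : Ctx → Pat → Ty → Ty → Prop
  | punit {Δ : Ctx} {m : Mode} {N : Tm} {B : Ty} :
      Mode.ge m B.mode → HasTy Δ N B →
      PatTy Δ (.punit N) (.unitT m) B
  | ppair {Δ : Ctx} {m : Mode} {x y : String} {N : Tm} {A₁ A₂ B : Ty} :
      Mode.ge m B.mode →
      HasTy ((x, A₁) :: (y, A₂) :: Δ) N B →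
      PatTy Δ (.ppair x y N) (.tensor m A₁ A₂) B
  | pdown {Δ : Ctx} {x : String} {N : Tm} {A B : Ty} :
      Mode.ge .L B.mode →
      HasTy ((x, A) :: Δ) N B →
      PatTy Δ (.pdown x N) (.down A) B
end

mutual
/-- The structural approximation PQ-X: same rule skeletons, shared
contexts, no splitting, no mode restrictions, implicit weakening. -/
inductive XTy : Ctx → Tm → Ty → Prop
  | var {Δ : Ctx} {x : String} {A : Ty} :
      (x, A) ∈ Δ → XTy Δ (.var x) A
  | lam {Δ : Ctx} {m : Mode} {x : String} {M : Tm} {A B : Ty} :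
      XTy ((x, A) :: Δ) M B →
      XTy Δ (.lam m x M) (.arrow m A B)
  | triv {Δ : Ctx} {m : Mode} : XTy Δ (.triv m) (.unitT m)
  | pair {Δ : Ctx} {m : Mode} {M N : Tm} {A B : Ty} :
      XTy Δ M A → XTy Δ N B → XTy Δ (.pair m M N) (.tensor m A B)
  | app {Δ : Ctx} {m : Mode} {M N : Tm} {A B : Ty} :
      XTy Δ M (.arrow m A B) → XTy Δ N A → XTy Δ (.app m M N) B
  | susp {Δ : Ctx} {lo hi : Mode} {M : Tm} {A : Ty} :
      XTy Δ M A → XTy Δ (.susp M) (.up lo hi A)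
  | force {Δ : Ctx} {lo hi : Mode} {M : Tm} {A : Ty} :
      XTy Δ M (.up lo hi A) → XTy Δ (.force M) A
  | down {Δ : Ctx} {M : Tm} {A : Ty} :
      XTy Δ M A → XTy Δ (.down M) (.down A)
  | gate {Δ : Ctx} {g : String} {S U : Ty} :
      S.Simple → U.Simple → XTy Δ (.gate g S U) (.arrow .Q S U)
  | mtch {Δ : Ctx} {M : Tm} {p : Pat} {A B : Ty} :
      XTy Δ M A → XPatTy Δ p A B → XTy Δ (.matchWith M p) B

/-- Pattern typing for PQ-X. -/
inductive XPatTy : Ctx → Pat → Ty → Ty → Prop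
  | punit {Δ : Ctx} {m : Mode} {N : Tm} {B : Ty} :
      XTy Δ N B → XPatTy Δ (.punit N) (.unitT m) B
  | ppair {Δ : Ctx} {m : Mode} {x y : String} {N : Tm} {A₁ A₂ B : Ty} :
      XTy ((x, A₁) :: (y, A₂) :: Δ) N B →
      XPatTy Δ (.ppair x y N) (.tensor m A₁ A₂) B
  | pdown {Δ : Ctx} {x : String} {N : Tm} {A B : Ty} :
      XTy ((x, A) :: Δ) N B →
      XPatTy Δ (.pdown x N) (.down A) B
end

/-- `⌊Ψ⌋`: the underlying neutral variable context of a typed one. -/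
def names (Ψ : Ctx) : List String := Ψ.map Prod.fst

mutual
/-- Canonical forms under a neutral variable context. -/
inductive Can : List String → Tm → Prop
  | triv {Pi : List String} {m : Mode} : Can Pi (.triv m)
  | pair {Pi : List String} {m : Mode} {M N : Tm} :
      Norm Pi M → Norm Pi N → Can Pi (.pair m M N)
  | lamU {Pi : List String} {x : String} {M : Tm} : Can Pi (.lam .U x M)
  | lamL {Pi : List String} {x : String} {M : Tm} : Can Pi (.lam .L x M)
  | lamQ {Pi : List String} {x : String} {M : Tm} :
      Norm (x :: Pi) M → Can Pi (.lam .Q x M)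
  | susp {Pi : List String} {M : Tm} : Can Pi (.susp M)
  | down {Pi : List String} {M : Tm} : Norm Pi M → Can Pi (.down M)

/-- Neutral forms: neutral variables and (iterated) gate applications. -/
inductive Neu : List String → Tm → Prop
  | var {Pi : List String} {x : String} : x ∈ Pi → Neu Pi (.var x)
  | gate {Pi : List String} {g : String} {S U : Ty} : Neu Pi (.gate g S U)
  | appCan {Pi : List String} {m : Mode} {g : String} {S U : Ty} {K : Tm} :
      Can Pi K → Neu Pi (.app m (.gate g S U) K)
  | appNeu {Pi : List String} {m : Mode} {g : String} {S U : Ty} {R : Tm} :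
      Neu Pi R → Neu Pi (.app m (.gate g S U) R)

/-- Normal forms: canonical, neutral, or a match on a neutral
discriminee with a normal body. -/
inductive Norm : List String → Tm → Prop
  | can {Pi : List String} {K : Tm} : Can Pi K → Norm Pi K
  | neu {Pi : List String} {R : Tm} : Neu Pi R → Norm Pi R
  | mtch {Pi : List String} {R : Tm} {p : Pat} :
      Neu Pi R → Norm (p.vars ++ Pi) p.body → Norm Pi (.matchWith R p)
end

/-- Elimination of a canonical form by a pattern. -/
inductive ECan : Tm → Pat → Tm → Prop
  | triv {m : Mode} {N : Tm} : ECan (.triv m) (.punit N) N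
  | pair {m : Mode} {V W : Tm} {x y : String} {N : Tm} :
      ECan (.pair m V W) (.ppair x y N) (subst1 y W (subst1 x V N))
  | down {V : Tm} {x : String} {N : Tm} :
      ECan (.down V) (.pdown x N) (subst1 x V N)

/-- The call-by-value single-step reduction relation, parameterized by
the context of free neutral circuit variables.  It reduces under circuit
lambda binders and under matches on neutral discriminees, and performs
commuting conversions of elimination forms past neutral matches. -/
inductive Step : List String → Tm → Tm → Prop
  | app1 {Pi : List String} {m : Mode} {M M' N : Tm} :
      Step Pi M M' → Step Pi (.app m M N) (.app m M' N)
  | app2 {Pi : List String} {m : Mode} {M N N' : Tm} :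
      Norm Pi M → Step Pi N N' → Step Pi (.app m M N) (.app m M N')
  | beta {Pi : List String} {m : Mode} {x : String} {M V : Tm} :
      Norm Pi V → Step Pi (.app m (.lam m x M) V) (subst1 x V M)
  | appCC {Pi : List String} {m : Mode} {R W : Tm} {p : Pat} :
      Neu Pi R → Norm Pi (.matchWith R p) → Norm Pi W →
      Step Pi (.app m (.matchWith R p) W)
        (.matchWith R (p.mapBody (fun b => .app m b W)))
  | lamQ {Pi : List String} {x : String} {M M' : Tm} :
      Step (x :: Pi) M M' → Step Pi (.lam .Q x M) (.lam .Q x M')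
  | pair1 {Pi : List String} {m : Mode} {M M' N : Tm} :
      Step Pi M M' → Step Pi (.pair m M N) (.pair m M' N)
  | pair2 {Pi : List String} {m : Mode} {M N N' : Tm} :
      Norm Pi M → Step Pi N N' → Step Pi (.pair m M N) (.pair m M N')
  | forceSusp {Pi : List String} {M : Tm} :
      Step Pi (.force (.susp M)) M
  | force1 {Pi : List String} {M M' : Tm} :
      Step Pi M M' → Step Pi (.force M) (.force M')
  | forceCC {Pi : List String} {R : Tm} {p : Pat} :
      Neu Pi R → Norm Pi (.matchWith R p) →
      Step Pi (.force (.matchWith R p))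
        (.matchWith R (p.mapBody (fun b => .force b)))
  | down1 {Pi : List String} {M M' : Tm} :
      Step Pi M M' → Step Pi (.down M) (.down M')
  | mtch1 {Pi : List String} {M M' : Tm} {p : Pat} :
      Step Pi M M' → Step Pi (.matchWith M p) (.matchWith M' p)
  | mtchK {Pi : List String} {K P : Tm} {p : Pat} :
      Can Pi K → ECan K p P → Step Pi (.matchWith K p) P
  | mtchR {Pi : List String} {R B' : Tm} {p : Pat} :
      Neu Pi R → Step (p.vars ++ Pi) p.body B' →
      Step Pi (.matchWith R p) (.matchWith R (p.withBody B'))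
  | mtchCC {Pi : List String} {R : Tm} {p q : Pat} :
      Neu Pi R → Norm Pi (.matchWith R p) →
      Step Pi (.matchWith (.matchWith R p) q)
        (.matchWith R (p.mapBody (fun b => .matchWith b q)))

/-- Multi-step reduction. -/
def Steps (Pi : List String) : Tm → Tm → Prop :=
  Relation.ReflTransGen (Step Pi)

/-- `P` halts: it reduces to a normal form. -/
def Halts (Pi : List String) (P : Tm) : Prop :=
  ∃ V, Steps Pi P V ∧ Norm Pi V

/-- `σ` is a neutral substitution from `Ψ` to `Φ`: it maps each neutral
variable of `Φ` to a neutral, well-typed term over `Ψ`. -/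
def NSub (σ : String → Tm) (Ψ Φ : Ctx) : Prop :=
  ∀ q ∈ Φ, Neu (names Ψ) (σ q.1) ∧ XTy Ψ (σ q.1) q.2

/-- Closure of a base predicate under neutral terms, one-step expansion,
and matches on neutral discriminees (the type-generic clauses of the
Kripke logical normalization predicate). -/
inductive Close (A : Ty) (base : Ctx → Tm → Prop) : Ctx → Tm → Prop
  | base {Ψ : Ctx} {P : Tm} : base Ψ P → Close A base Ψ P
  | neu {Ψ : Ctx} {R : Tm} :
      Neu (names Ψ) R → XTy Ψ R A → Close A base Ψ R
  | steps {Ψ : Ctx} {P P' : Tm} :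
      Step (names Ψ) P P' → Close A base Ψ P' → Close A base Ψ P
  | mtch {Ψ : Ctx} {R : Tm} {p : Pat} {S : Ty} :
      Neu (names Ψ) R → XTy Ψ R S →
      Close A base (patCtx p S ++ Ψ) p.body →
      Close A base Ψ (.matchWith R p)

/-- The type-directed clauses of the logical predicate: introduction
forms at positive types, elimination forms at negative types. -/
def LRbase : Ty → Ctx → Tm → Prop
  | .unitT m, _, P => P = .triv m
  | .qubit, _, _ => False
  | .tensor m A B, Ψ, P => ∃ M N, P = .pair m M N ∧
      Close A (LRbase A) Ψ M ∧ Close B (LRbase B) Ψ N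
  | .arrow m A B, Ψ, P => Halts (names Ψ) P ∧
      ∀ (Φ : Ctx) (σ : String → Tm), NSub σ Φ Ψ →
        ∀ Q, Close A (LRbase A) Φ Q →
          Close B (LRbase B) Φ (.app m (P.subst σ) Q)
  | .up _ _ A, Ψ, P => Close A (LRbase A) Ψ (.force P)
  | .down A, Ψ, P => ∃ V, P = .down V ∧ Close A (LRbase A) Ψ V

/-- The Kripke logical normalization predicate `Ψ ⊩ P ∈ ⟦A⟧`. -/
def LR (Ψ : Ctx) (P : Tm) (A : Ty) : Prop := Close A (LRbase A) Ψ P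

/-- Reducible substitutions: each variable is mapped to a functionally
closed normal form satisfying the logical predicate at its type. -/
def RSub (Ψ : Ctx) (σ : String → Tm) (Δ : Ctx) : Prop :=
  ∀ q ∈ Δ, Norm (names Ψ) (σ q.1) ∧ LR Ψ (σ q.1) q.2


/- ===== Auxiliary lemmas ===== -/

theorem vars_withBody (p : Pat) (B : Tm) : (p.withBody B).vars = p.vars := by
  cases p <;> rfl

theorem body_withBody (p : Pat) (B : Tm) : (p.withBody B).body = B := by
  cases p <;> rfl

theorem withBody_withBody (p : Pat) (B B' : Tm) :
    (p.withBody B).withBody B' = p.withBody B' := by cases p <;> rfl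

theorem withBody_body (p : Pat) : p.withBody p.body = p := by cases p <;> rfl

theorem consSub {Pi Pi' : List String} (hs : Pi ⊆ Pi') (x : String) :
    (x :: Pi) ⊆ (x :: Pi') := List.cons_subset_cons x hs

theorem appSub {Pi Pi' : List String} (hs : Pi ⊆ Pi') (l : List String) :
    (l ++ Pi) ⊆ (l ++ Pi') := by
  intro a ha
  simp only [List.mem_append] at ha ⊢
  exact ha.imp id (fun h => hs h)

theorem Pat.sizeOf_body_lt (p : Pat) : sizeOf p.body < sizeOf p := by
  cases p <;> simp [Pat.body] <;> omega

mutual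
theorem Can.mono {Pi Pi' : List String} {M : Tm}
    (hs : Pi ⊆ Pi') (h : Can Pi M) : Can Pi' M :=
  match M, h with
  | _, .triv => .triv
  | .pair _ _ _, .pair hM hN => .pair (Norm.mono hs hM) (Norm.mono hs hN)
  | _, .lamU => .lamU
  | _, .lamL => .lamL
  | .lam _ x _, .lamQ h => .lamQ (Norm.mono (consSub hs x) h)
  | _, .susp => .susp
  | .down _, .down h => .down (Norm.mono hs h)
termination_by (sizeOf M, 0)
decreasing_by all_goals simp_wf <;> omega

theorem Neu.mono {Pi Pi' : List String} {M : Tm}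
    (hs : Pi ⊆ Pi') (h : Neu Pi M) : Neu Pi' M :=
  match M, h with
  | _, .var hx => .var (hs hx)
  | _, .gate => .gate
  | .app _ _ _, .appCan h => .appCan (Can.mono hs h)
  | .app _ _ _, .appNeu h => .appNeu (Neu.mono hs h)
termination_by (sizeOf M, 0)
decreasing_by all_goals simp_wf <;> omega

theorem Norm.mono {Pi Pi' : List String} {M : Tm}
    (hs : Pi ⊆ Pi') (h : Norm Pi M) : Norm Pi' M :=
  match M, h with
  | _, .can h => .can (Can.mono hs h)
  | _, .neu h => .neu (Neu.mono hs h)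
  | .matchWith _ p, .mtch hR hB =>
      .mtch (Neu.mono hs hR) (Norm.mono (appSub hs p.vars) hB)
termination_by (sizeOf M, 1)
decreasing_by
  all_goals simp_wf
  all_goals first
    | omega
    | (have := Pat.sizeOf_body_lt p; omega)
end

theorem Step.mono {Pi Pi' : List String} {M M' : Tm}
    (hs : Pi ⊆ Pi') (h : Step Pi M M') : Step Pi' M M' := by
  induction h generalizing Pi' with
  | app1 _ ih => exact .app1 (ih hs)
  | app2 hN _ ih => exact .app2 (hN.mono hs) (ih hs)
  | beta hV => exact .beta (hV.mono hs)
  | appCC hR hM hW => exact .appCC (hR.mono hs) (hM.mono hs) (hW.mono hs)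
  | lamQ _ ih => exact .lamQ (ih (consSub hs _))
  | pair1 _ ih => exact .pair1 (ih hs)
  | pair2 hN _ ih => exact .pair2 (hN.mono hs) (ih hs)
  | forceSusp => exact .forceSusp
  | force1 _ ih => exact .force1 (ih hs)
  | forceCC hR hM => exact .forceCC (hR.mono hs) (hM.mono hs)
  | down1 _ ih => exact .down1 (ih hs)
  | mtch1 _ ih => exact .mtch1 (ih hs)
  | mtchK hK hE => exact .mtchK (hK.mono hs) hE
  | mtchR hR _ ih => exact .mtchR (hR.mono hs) (ih (appSub hs _))
  | mtchCC hR hM => exact .mtchCC (hR.mono hs) (hM.mono hs)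

theorem Steps.mono {Pi Pi' : List String} {M M' : Tm}
    (hs : Pi ⊆ Pi') (h : Steps Pi M M') : Steps Pi' M M' :=
  Relation.ReflTransGen.mono (fun _ _ hab => Step.mono hs hab) _ _ h

theorem norm_not_force {Pi : List String} {P : Tm} (h : Norm Pi (.force P)) :
    False := by
  cases h with
  | can h => cases h
  | neu h => cases h

/-- If `force P` halts then `P` halts. -/
theorem haltsForce {Pi : List String} {P V : Tm}
    (hs : Steps Pi (.force P) V) (hn : Norm Pi V) : Halts Pi P := by
  have : ∀ Q, Steps Pi Q V → ∀ P, Q = .force P → Halts Pi P := by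
    intro Q hQ
    induction hQ using Relation.ReflTransGen.head_induction_on with
    | refl => intro P hP; subst hP; exact absurd hn norm_not_force
    | head hstep _ ih =>
      intro P hP; subst hP
      cases hstep with
      | forceSusp => exact ⟨_, .refl, .can .susp⟩
      | force1 h1 =>
        obtain ⟨W, sW, nW⟩ := ih _ rfl
        exact ⟨W, .head h1 sW, nW⟩
      | forceCC hR hM => exact ⟨_, .refl, hM⟩
  exact this _ hs P rfl

theorem stepsMtch {Pi : List String} {R : Tm} (hR : Neu Pi R) (p : Pat)
    {B B' : Tm} (h : Steps (p.vars ++ Pi) B B') :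
    Steps Pi (.matchWith R (p.withBody B)) (.matchWith R (p.withBody B')) :=
  Relation.ReflTransGen.lift (p := Step Pi) (fun b => Tm.matchWith R (p.withBody b))
    (fun a b hab => by
      have := Step.mtchR (p := p.withBody a) hR
        (by rw [body_withBody, vars_withBody]; exact hab)
      rwa [withBody_withBody] at this) _ _ h

theorem names_patCtx_sub (p : Pat) (S : Ty) : names (patCtx p S) ⊆ p.vars := by
  cases p <;> cases S <;> simp [patCtx, Pat.vars, names]

theorem closeHalts {A : Ty} {base : Ctx → Tm → Prop} {Ψ : Ctx} {P : Tm}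
    (hb : ∀ Ψ P, base Ψ P → Halts (names Ψ) P)
    (h : Close A base Ψ P) : Halts (names Ψ) P := by
  induction h with
  | base hP => exact hb _ _ hP
  | neu hR _ => exact ⟨_, .refl, .neu hR⟩
  | steps hstep _ ih =>
    obtain ⟨V, sV, nV⟩ := ih
    exact ⟨V, .head hstep sV, nV⟩
  | @mtch Ψ R p S hR _ _ ih =>
    obtain ⟨B', sB, nB⟩ := ih
    have hnames : names (patCtx p S ++ Ψ) = names (patCtx p S) ++ names Ψ :=
      List.map_append
    have hsub : names (patCtx p S ++ Ψ) ⊆ p.vars ++ names Ψ := by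
      rw [hnames]; intro a ha
      simp only [List.mem_append] at ha ⊢
      exact ha.imp (fun h => names_patCtx_sub p S h) id
    have sB' : Steps (p.vars ++ names Ψ) p.body B' := Steps.mono hsub sB
    have nB' : Norm (p.vars ++ names Ψ) B' := Norm.mono hsub nB
    refine ⟨.matchWith R (p.withBody B'), ?_, ?_⟩
    · have := stepsMtch hR p sB'
      rwa [withBody_body] at this
    · exact .mtch hR (by rw [vars_withBody, body_withBody]; exact nB')

theorem lrbaseHalts : ∀ (A : Ty) {Ψ : Ctx} {P : Tm},
    LRbase A Ψ P → Halts (names Ψ) P := by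
  intro A
  induction A with
  | unitT m =>
    intro Ψ P h
    simp only [LRbase] at h
    subst h
    exact ⟨_, .refl, .can .triv⟩
  | qubit => intro Ψ P h; exact h.elim
  | tensor m A B ihA ihB =>
    intro Ψ P h
    obtain ⟨M, N, rfl, hM, hN⟩ := h
    obtain ⟨M', sM, nM⟩ := closeHalts (fun _ _ => ihA) hM
    obtain ⟨N', sN, nN⟩ := closeHalts (fun _ _ => ihB) hN
    refine ⟨.pair m M' N', ?_, .can (.pair nM nN)⟩
    have s1 : Steps (names Ψ) (.pair m M N) (.pair m M' N) :=
      Relation.ReflTransGen.lift (p := Step (names Ψ)) (fun t => Tm.pair m t N)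
        (fun _ _ hab => Step.pair1 hab) _ _ sM
    have s2 : Steps (names Ψ) (.pair m M' N) (.pair m M' N') :=
      Relation.ReflTransGen.lift (p := Step (names Ψ)) (fun t => Tm.pair m M' t)
        (fun _ _ hab => Step.pair2 nM hab) _ _ sN
    exact s1.trans s2
  | arrow m A B _ _ => intro Ψ P h; exact h.1
  | up lo hi A ihA =>
    intro Ψ P h
    obtain ⟨V, sV, nV⟩ := closeHalts (fun _ _ => ihA) h
    exact haltsForce sV nV
  | down A ihA =>
    intro Ψ P h
    obtain ⟨V, rfl, hV⟩ := h
    obtain ⟨V', sV, nV⟩ := closeHalts (fun _ _ => ihA) hV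
    exact ⟨.down V', Relation.ReflTransGen.lift (p := Step (names Ψ)) Tm.down
      (fun _ _ hab => Step.down1 hab) _ _ sV, .can (.down nV)⟩

/-- adequacy of the logical normalization predicate. -/
theorem adequacy {Ψ : Ctx} {P : Tm} {A : Ty}
    (h : LR Ψ P A) : Halts (names Ψ) P :=
  closeHalts (fun _ _ => lrbaseHalts A) h

end PQA
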